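/- Let σ be a word with des(σ) = r, π = π₁⋯π_n a word with des(π) = s, σ and π disjoint, and α a shuffle of σ and π with des(α) = k. For 0 ≤ i ≤ n let α^{(i)} be the word obtained from α by deleting π₁, …, π_i, and set t(i) = maj(α^{(i−1)}) − maj(α^{(i)}) − d_i(π). If j₁ is the least index in {1,…,n} with des(α^{(j₁−1)}) = des(α^{(j₁)}), then t(j₁) ≤ k − s. -/

import Mathlib

open Polynomial List

/-- The set of (1-indexed) descents of a word `w`: indices `i` with
`1 ≤ i ≤ length w - 1` and `w_i > w_{i+1}`. -/
def descents (w : List ℕ) : Finset ℕ :=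
  (Finset.Ico 1 w.length).filter (fun i => w.getD i 0 < w.getD (i - 1) 0)

/-- The number of descents of a word. -/
def des (w : List ℕ) : ℕ := (descents w).card

/-- The major index of a word: the sum of its descents. -/
def maj (w : List ℕ) : ℕ := ∑ i ∈ descents w, i

/-- `dge i w` is the number of descents of `w` that are `≥ i`. -/
def dge (i : ℕ) (w : List ℕ) : ℕ := ((descents w).filter (fun j => i ≤ j)).card

/-- `α` is a shuffle of the disjoint words `σ` and `π`. -/
def IsShuffle (σ π α : List ℕ) : Prop :=
  α.length = σ.length + π.length ∧ σ.Sublist α ∧ π.Sublist α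

/-- `ins σ i r` is `σ^{(i)}(r)`, the word obtained by inserting `r`
immediately before `σ_{i+1}` (after `σ_n` when `i = n`). -/
def ins (σ : List ℕ) (i r : ℕ) : List ℕ := σ.insertIdx i r

/-- The major increment `im(σ,i,r) = maj(σ^{(i)}(r)) - maj(σ)`. -/
def im (σ : List ℕ) (i r : ℕ) : ℤ := (maj (ins σ i r) : ℤ) - (maj σ : ℤ)

/-- The space `i` (for `0 ≤ i ≤ n`) is an RL-space of `σ` relative to `r`. -/
def IsRL (σ : List ℕ) (r i : ℕ) : Prop :=
  (i = σ.length ∧ ∀ x ∈ σ.getLast?, x < r) ∨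
  (i = 0 ∧ ∀ x ∈ σ.head?, r < x) ∨
  (0 < i ∧ i < σ.length ∧ r < σ.getD i 0 ∧ σ.getD i 0 < σ.getD (i - 1) 0) ∨
  (0 < i ∧ i < σ.length ∧ σ.getD i 0 < σ.getD (i - 1) 0 ∧ σ.getD (i - 1) 0 < r) ∨
  (0 < i ∧ i < σ.length ∧ σ.getD (i - 1) 0 < r ∧ r < σ.getD i 0)

/-- The Gaussian binomial coefficient `[N choose M]_q`, as a polynomial in `q`:
`∏_{j=1}^{M} (1 - q^{N-M+j}) / ∏_{j=1}^{M} (1 - q^{j})` when `0 ≤ M ≤ N`, and `0` otherwise. -/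
noncomputable def gauss (N M : ℤ) : Polynomial ℚ :=
  if 0 ≤ M ∧ M ≤ N then
    (∏ j ∈ Finset.Icc 1 M.toNat, (1 - (X : Polynomial ℚ) ^ (N - M + j).toNat)) /
      (∏ j ∈ Finset.Icc 1 M.toNat, (1 - (X : Polynomial ℚ) ^ (j : ℕ)))
  else 0

/-- `delPrefix α π i` is `α^{(i)}`: the word obtained from `α` by deleting
the letters `π₁, …, π_i`. -/
def delPrefix (α π : List ℕ) (i : ℕ) : List ℕ :=
  α.filter (fun x => !((π.take i).contains x))


section Aux

lemma mem_descents' {w : List ℕ} {i : ℕ} :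
    i ∈ descents w ↔ 1 ≤ i ∧ i < w.length ∧ w.getD i 0 < w.getD (i-1) 0 := by
  simp [descents, Finset.mem_filter, Finset.mem_Ico, and_assoc]

/-- Indicator that `a :: l` has a descent at position 1. -/
def dE (a : ℕ) (l : List ℕ) : ℕ := if 0 < l.length ∧ l.getD 0 0 < a then 1 else 0

lemma descents_cons' (a : ℕ) (l : List ℕ) :
    descents (a :: l) = (descents l).image (· + 1) ∪
      (if 0 < l.length ∧ l.getD 0 0 < a then {1} else ∅) := by
  ext i
  simp only [Finset.mem_union, Finset.mem_image, mem_descents']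
  match i with
  | 0 =>
    simp only [List.length_cons]
    constructor
    · rintro ⟨h, -⟩; omega
    · rintro (⟨j, hj, hj2⟩ | h)
      · omega
      · split at h <;> simp_all
  | 1 =>
    simp only [List.length_cons, List.getD_cons_succ, List.getD_cons_zero]
    constructor
    · rintro ⟨-, h1, h2⟩
      right; rw [if_pos ⟨by omega, h2⟩]; simp
    · rintro (⟨j, hj, hj2⟩ | h)
      · omega
      · split at h
        · rename_i hc; simp at h; exact ⟨le_refl 1, by omega, hc.2⟩
        · simp at h
  | (j+2) =>
    simp only [List.length_cons, List.getD_cons_succ]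
    constructor
    · rintro ⟨-, h1, h2⟩
      left; exact ⟨j+1, ⟨by omega, by omega, by simpa using h2⟩, rfl⟩
    · rintro (⟨j', hj', hj2⟩ | h)
      · obtain ⟨h1, h2, h3⟩ := hj'
        have : j' = j + 1 := by omega
        subst this
        exact ⟨by omega, by omega, by simpa using h3⟩
      · split at h <;> simp at h

lemma one_notmem_image' {l : List ℕ} : (1:ℕ) ∉ (descents l).image (· + 1) := by
  simp only [Finset.mem_image, not_exists]
  rintro j ⟨hj, hj1⟩
  have := (mem_descents'.1 hj).1
  omega

lemma disj_aux (a : ℕ) (l : List ℕ) :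
    Disjoint ((descents l).image (· + 1))
      (if 0 < l.length ∧ l.getD 0 0 < a then ({1} : Finset ℕ) else ∅) := by
  split
  · simp only [Finset.disjoint_singleton_right]; exact one_notmem_image'
  · simp

lemma inj_succ : Function.Injective (· + 1 : ℕ → ℕ) := add_left_injective 1

lemma des_cons (a : ℕ) (l : List ℕ) : des (a :: l) = des l + dE a l := by
  rw [des, descents_cons', Finset.card_union_of_disjoint (disj_aux a l),
    Finset.card_image_of_injective _ inj_succ, dE, des]
  split <;> simp

lemma maj_cons (a : ℕ) (l : List ℕ) : maj (a :: l) = maj l + des l + dE a l := by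
  rw [maj, descents_cons', Finset.sum_union (disj_aux a l),
    Finset.sum_image (fun x _ y _ h => inj_succ h)]
  rw [Finset.sum_add_distrib]
  simp only [Finset.sum_const, smul_eq_mul, mul_one]
  rw [dE, maj, des]
  split <;> simp

lemma dge_one (w : List ℕ) : dge 1 w = des w := by
  rw [dge, des, Finset.filter_true_of_mem]
  intro j hj; exact (mem_descents'.1 hj).1

lemma dge_cons_succ (i : ℕ) (hi : 1 ≤ i) (a : ℕ) (l : List ℕ) :
    dge (i+1) (a :: l) = dge i l := by
  rw [dge, descents_cons', Finset.filter_union, Finset.filter_image]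
  have h1 : Finset.filter (fun j => i + 1 ≤ j)
      (if 0 < l.length ∧ l.getD 0 0 < a then ({1} : Finset ℕ) else ∅) = ∅ := by
    split
    · rw [Finset.filter_singleton, if_neg (by omega)]
    · simp
  rw [h1, Finset.union_empty, Finset.card_image_of_injective _ inj_succ, dge]
  congr 1
  apply Finset.filter_congr
  intro j _
  show (i + 1 ≤ j + 1) ↔ (i ≤ j)
  omega

lemma dE_le_one (a : ℕ) (l : List ℕ) : dE a l ≤ 1 := by
  rw [dE]; split <;> omega

lemma dE_tri (a b : ℕ) (t : List ℕ) :
    dE a t ≤ dE a (b :: t) + dE b t ∧ dE a (b :: t) + dE b t ≤ dE a t + 1 := by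
  match t with
  | [] => constructor <;> (simp only [dE]; split_ifs <;> simp_all)
  | c :: t' =>
    simp only [dE, List.length_cons, List.getD_cons_zero]
    split_ifs <;> omega

lemma dE_cons_head (a b : ℕ) (l l' : List ℕ) :
    dE a (b :: l) = dE a (b :: l') := by simp [dE]

lemma key_des : ∀ (p : ℕ) (A : List ℕ), p < A.length →
    des (A.eraseIdx p) ≤ des A ∧ des A ≤ des (A.eraseIdx p) + 1 := by
  intro p
  induction p with
  | zero =>
    intro A hA
    match A with
    | a :: l =>
      simp only [List.eraseIdx_cons_zero]
      have := des_cons a l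
      have := dE_le_one a l
      omega
  | succ p ih =>
    intro A hA
    match A with
    | a :: l =>
      have hp : p < l.length := by simpa using hA
      simp only [List.eraseIdx_cons_succ]
      have h1 := des_cons a l
      have h2 := des_cons a (l.eraseIdx p)
      have h3 := ih l hp
      match p, l with
      | 0, b :: t =>
        simp only [List.eraseIdx_cons_zero] at h2 h3 ⊢
        have h4 := des_cons b t
        have h5 := dE_tri a b t
        omega
      | p'+1, b :: t =>
        simp only [List.eraseIdx_cons_succ] at h2 h3 ⊢
        have h6 : dE a (b :: t) = dE a (b :: t.eraseIdx p') := dE_cons_head a b _ _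
        omega

lemma key_maj : ∀ (p : ℕ) (A : List ℕ), p < A.length →
    (maj A : ℤ) = maj (A.eraseIdx p) + p * ((des A : ℤ) - des (A.eraseIdx p))
      + dge (p+1) A := by
  intro p
  induction p with
  | zero =>
    intro A hA
    match A with
    | a :: l =>
      simp only [List.eraseIdx_cons_zero, Nat.cast_zero, zero_mul, add_zero, zero_add]
      rw [dge_one, maj_cons, des_cons]
      push_cast
      ring
  | succ p ih =>
    intro A hA
    match A with
    | a :: l =>
      have hp : p < l.length := by simpa using hA
      simp only [List.eraseIdx_cons_succ]
      have h1 := maj_cons a l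
      have h2 := maj_cons a (l.eraseIdx p)
      have hd1 := des_cons a l
      have hd2 := des_cons a (l.eraseIdx p)
      have h3 := ih l hp
      have h4 : dge (p+1+1) (a :: l) = dge (p+1) l := dge_cons_succ (p+1) (by omega) a l
      rw [h4]
      match p, l with
      | 0, b :: t =>
        simp only [List.eraseIdx_cons_zero] at h2 hd2 h3 ⊢
        push_cast [h1, h2, hd1, hd2] at *
        linarith
      | p'+1, b :: t =>
        simp only [List.eraseIdx_cons_succ] at h2 hd2 h3 ⊢
        have h6 : dE a (b :: t) = dE a (b :: t.eraseIdx p') := dE_cons_head a b _ _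
        push_cast [h1, h2, hd1, hd2, h6] at *
        linarith

lemma shuffle_nodup {σ π α : List ℕ} (hσ : σ.Nodup) (hπ : π.Nodup)
    (hd : σ.Disjoint π) (h : IsShuffle σ π α) : α.Nodup := by
  obtain ⟨hlen, hσs, hπs⟩ := h
  have hle : (↑(σ ++ π) : Multiset ℕ) ≤ ↑α := by
    rw [Multiset.le_iff_count]
    intro a
    simp only [Multiset.coe_count, List.count_append]
    by_cases ha : a ∈ σ
    · have : π.count a = 0 := List.count_eq_zero.2 (fun hc => hd ha hc)
      rw [this, add_zero]
      exact hσs.count_le a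
    · rw [List.count_eq_zero.2 ha, zero_add]
      exact hπs.count_le a
  have hcard : Multiset.card (↑α : Multiset ℕ) ≤ Multiset.card (↑(σ ++ π) : Multiset ℕ) := by
    simp [hlen]
  have heq := Multiset.eq_of_le_of_card_le hle hcard
  have hnd : (↑(σ ++ π) : Multiset ℕ).Nodup := by
    simp only [Multiset.coe_nodup]
    exact List.Nodup.append hσ hπ hd
  rw [heq] at hnd
  simpa using hnd

lemma delPrefix_zero (α π : List ℕ) : delPrefix α π 0 = α := by
  simp [delPrefix]

lemma delPrefix_succ' (α π : List ℕ) (j : ℕ) (hj : j < π.length) :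
    delPrefix α π (j+1) = (delPrefix α π j).filter (fun x => !(x == π.getD j 0)) := by
  rw [delPrefix, delPrefix, List.filter_filter]
  have ht : π.take (j+1) = π.take j ++ [π.getD j 0] := by
    rw [List.take_succ, List.getElem?_eq_getElem hj]
    simp [List.getD_eq_getElem?_getD, List.getElem?_eq_getElem hj]
  rw [ht]
  apply List.filter_congr
  intro x _
  rw [Bool.eq_iff_iff]
  simp [List.elem_iff, beq_iff_eq, not_or, and_comm]

lemma filter_ne_eraseIdx : ∀ (A : List ℕ) (b : ℕ), A.Nodup → b ∈ A →
    ∃ p, p < A.length ∧ A.filter (fun x => !(x == b)) = A.eraseIdx p := by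
  intro A
  induction A with
  | nil => intro b _ hb; simp at hb
  | cons a A ih =>
    intro b hnd hb
    rcases List.mem_cons.1 hb with rfl | hb'
    · refine ⟨0, by simp, ?_⟩
      simp only [List.eraseIdx_cons_zero, List.filter_cons]
      rw [if_neg (by simp)]
      apply List.filter_eq_self.2
      intro x hx
      have : x ≠ b := fun h => (List.nodup_cons.1 hnd).1 (h ▸ hx)
      simp [this]
    · obtain ⟨p, hp, hfe⟩ := ih b (List.nodup_cons.1 hnd).2 hb'
      refine ⟨p+1, by simp; omega, ?_⟩
      simp only [List.eraseIdx_cons_succ, List.filter_cons]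
      have : a ≠ b := fun h => (List.nodup_cons.1 hnd).1 (h ▸ hb')
      rw [if_pos (by simp [this]), hfe]

lemma dge_le_des (i : ℕ) (w : List ℕ) : dge i w ≤ des w :=
  Finset.card_filter_le _ _

lemma des_le_dge_add (i : ℕ) (w : List ℕ) (hi : 1 ≤ i) :
    des w ≤ dge i w + (i - 1) := by
  rw [des, dge]
  have h := Finset.card_filter_add_card_filter_not
    (s := descents w) (p := fun j => i ≤ j)
  have hsub : (descents w).filter (fun j => ¬ i ≤ j) ⊆ Finset.Ico 1 i := by
    intro j hj
    rw [Finset.mem_filter] at hj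
    have := (mem_descents'.1 hj.1).1
    rw [Finset.mem_Ico]
    omega
  have := Finset.card_le_card hsub
  rw [Nat.card_Ico] at this
  omega

end Aux

/-- If `j₁` is the least index at which deleting `π_{j₁}` keeps the descent number,
then `t(j₁) ≤ k - s`. -/
theorem t_first_keep_le (m n r s k : ℕ) (σ π α : List ℕ)
    (hσl : σ.length = m) (hπl : π.length = n) (hσnd : σ.Nodup) (hπnd : π.Nodup)
    (hdisj : σ.Disjoint π) (hr : des σ = r) (hs : des π = s)
    (hα : IsShuffle σ π α) (hk : des α = k)
    (t : ℕ → ℤ)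
    (ht : ∀ i, t i = (maj (delPrefix α π (i - 1)) : ℤ) - (maj (delPrefix α π i) : ℤ)
      - (dge i π : ℤ))
    (j₁ : ℕ) (hj1 : 1 ≤ j₁) (hj1n : j₁ ≤ n)
    (hkeep : des (delPrefix α π (j₁ - 1)) = des (delPrefix α π j₁))
    (hleast : ∀ j, 1 ≤ j → j < j₁ →
      des (delPrefix α π (j - 1)) ≠ des (delPrefix α π j)) :
    t j₁ ≤ (k : ℤ) - s := by
  have hαnd : α.Nodup := shuffle_nodup hσnd hπnd hdisj hα
  set A : ℕ → List ℕ := fun j => delPrefix α π j with hA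
  have hAnd : ∀ j, (A j).Nodup := fun j => hαnd.filter _
  have hstep : ∀ j, j < n → ∃ p, p < (A j).length ∧ A (j+1) = (A j).eraseIdx p := by
    intro j hjn
    have hjl : j < π.length := by omega
    have hbπ : π.getD j 0 ∈ π := by
      rw [List.getD_eq_getElem?_getD, List.getElem?_eq_getElem hjl]
      simpa using List.getElem_mem hjl
    have hbt : π.getD j 0 ∉ π.take j := by
      intro hmem
      have hsplit : π = π.take j ++ π.drop j := (List.take_append_drop j π).symm
      have hnd2 := hπnd
      rw [hsplit, List.nodup_append] at hnd2
      have hdrop : π.getD j 0 ∈ π.drop j := by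
        have h1 : π.getD j 0 = π[j] := by
          rw [List.getD_eq_getElem?_getD, List.getElem?_eq_getElem hjl]; rfl
        rw [h1, List.drop_eq_getElem_cons hjl]
        exact List.mem_cons_self
      exact hnd2.2.2 _ hmem _ hdrop rfl
    have hb : π.getD j 0 ∈ A j := by
      rw [hA]
      simp only [delPrefix, List.mem_filter]
      refine ⟨hα.2.2.subset hbπ, ?_⟩
      simp only [Bool.not_eq_true']
      rw [← Bool.not_eq_true]
      intro hc
      exact hbt (by
        have : π.getD j 0 ∈ π.take j := List.elem_iff.1 (by
          have hsub : π.take j ⊆ π.take j := fun _ h => h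
          exact hc)
        exact this)
    obtain ⟨p, hp, he⟩ := filter_ne_eraseIdx (A j) (π.getD j 0) (hAnd j) hb
    refine ⟨p, hp, ?_⟩
    rw [hA]
    show delPrefix α π (j+1) = _
    rw [delPrefix_succ' α π j hjl]
    exact he
  have hdchain : ∀ j, j + 1 ≤ j₁ → des (A j) + j = k := by
    intro j
    induction j with
    | zero =>
      intro _
      have : A 0 = α := delPrefix_zero α π
      rw [this, hk]
      omega
    | succ j ih =>
      intro hjj
      have h1 := ih (by omega)
      obtain ⟨p, hp, he⟩ := hstep j (by omega)
      have hkd := key_des p (A j) hp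
      rw [← he] at hkd
      have hne := hleast (j+1) (by omega) (by omega)
      simp only [Nat.add_sub_cancel] at hne
      have hne' : des (A j) ≠ des (A (j+1)) := hne
      omega
  have hj0 : j₁ - 1 + 1 = j₁ := by omega
  have hdesA : des (A (j₁ - 1)) + (j₁ - 1) = k := hdchain (j₁ - 1) (by omega)
  obtain ⟨p, hp, he⟩ := hstep (j₁ - 1) (by omega)
  rw [hj0] at he
  have hkeep' : des (A (j₁ - 1)) = des ((A (j₁ - 1)).eraseIdx p) := by
    rw [← he]; exact hkeep
  have hm := key_maj p (A (j₁ - 1)) hp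
  rw [← hkeep'] at hm
  simp only [sub_self, mul_zero, add_zero] at hm
  have hdge1 : dge (p+1) (A (j₁ - 1)) ≤ des (A (j₁ - 1)) := dge_le_des _ _
  have hdge2 : des π ≤ dge j₁ π + (j₁ - 1) := des_le_dge_add j₁ π hj1
  rw [ht j₁]
  have heq1 : delPrefix α π (j₁ - 1) = A (j₁ - 1) := rfl
  have heq2 : delPrefix α π j₁ = (A (j₁ - 1)).eraseIdx p := he
  rw [heq1, heq2]
  rw [hs] at hdge2
  have hk' : (des (A (j₁ - 1)) : ℤ) + (j₁ - 1 : ℕ) = k := by exact_mod_cast congrArg (Nat.cast : ℕ → ℤ) hdesA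
  push_cast at hk' hdge2 ⊢
  omega
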